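/- Let x_1, ..., x_m be i.i.d. samples from the distribution D on [N] with P(X = k) = (1/2)·3^{k-N} for k ∈ [N-1] and P(X=N) the remaining mass, where m = T/2 and log T > 2N (so T ≥ 4^N·3^N, loosely T·3^{-N} ≥ N suffices). Let t_k be the first index t ≤ m with x_t ≤ k (t_k = ∞ if none) and let A_k be the event {t_k < ∞ and x_{t_k} = k}. Then P(A_k) ≥ 1/3 for every k ∈ [N-1], and hence the expected number of indices t with x_t < min{x_1, ..., x_{t-1}} is at least N/3. -/

import Mathlib

open MeasureTheory
open scoped Classical ENNReal

lemma geom3 (k : ℕ) : ∑ j ∈ Finset.Icc 1 k, (3:ℝ)^j ≤ (3/2) * 3^k := by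
  induction k with
  | zero => simp; norm_num
  | succ k ih =>
    rw [Finset.sum_Icc_succ_top (by omega : 1 ≤ k + 1)]
    rw [pow_succ]
    nlinarith [ih]

lemma finset_meas (D : Measure ℕ) (s : Finset ℕ) : D ↑s = ∑ j ∈ s, D {j} := by
  have : (↑s : Set ℕ) = ⋃ j ∈ s, {j} := by ext n; simp
  rw [this, measure_biUnion_finset ?_ (fun b _ => MeasurableSet.of_discrete)]
  intro i _ j _ hij
  simp [Function.onFun, Set.disjoint_singleton_left, hij]

lemma bern_half (N m : ℕ) (hN : 2 ≤ N) (hm : 3^N ≤ m) :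
    (1 - (3/2) * ((3:ℝ)^N)⁻¹)^m ≤ 1/2 := by
  set x : ℝ := (3/2) * ((3:ℝ)^N)⁻¹ with hx
  have h3N : (9:ℝ) ≤ 3^N := by
    calc (9:ℝ) = 3^2 := by norm_num
    _ ≤ 3^N := by apply pow_le_pow_right₀ (by norm_num) hN
  have hxpos : 0 < x := by positivity
  have hi : ((3:ℝ)^N)⁻¹ ≤ (9:ℝ)⁻¹ := by
    rw [inv_le_inv₀ (by positivity) (by norm_num)]
    exact h3N
  have hxle : x ≤ 1/6 := by rw [hx]; nlinarith [hi]
  have hmx : (3:ℝ)/2 ≤ m * x := by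
    have hm' : (3:ℝ)^N ≤ m := by exact_mod_cast Nat.cast_le.mpr hm |>.trans_eq (by push_cast; ring)
    calc (3:ℝ)/2 = 3^N * x := by rw [hx, ← mul_assoc, mul_comm ((3:ℝ)^N), mul_assoc, mul_inv_cancel₀ (by positivity), mul_one]
    _ ≤ m * x := by apply mul_le_mul_of_nonneg_right hm' hxpos.le
  have hbern : 1 + (m:ℝ) * x ≤ (1 + x)^m := by
    have := one_add_mul_le_pow (by linarith : (-2:ℝ) ≤ x) m
    linarith
  have h1x : (0:ℝ) ≤ 1 - x := by linarith
  have h1 : (1 + (m:ℝ)*x) * (1-x)^m ≤ 1 := by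
    calc (1 + (m:ℝ)*x) * (1-x)^m ≤ (1+x)^m * (1-x)^m := by
          apply mul_le_mul_of_nonneg_right hbern (pow_nonneg h1x m)
    _ = ((1+x)*(1-x))^m := (mul_pow _ _ _).symm
    _ = (1 - x^2)^m := by ring_nf
    _ ≤ 1 := pow_le_one₀ (by nlinarith) (by nlinarith)
  have ht : (0:ℝ) ≤ (1-x)^m := pow_nonneg h1x m
  nlinarith [mul_le_mul_of_nonneg_right (show (2:ℝ) ≤ 1 + m*x by linarith) ht]


lemma cyl_meas (m k : ℕ) (D : Measure ℕ) [IsProbabilityMeasure D] (t : Fin m) :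
    Measure.pi (fun _ : Fin m => D) {ω : Fin m → ℕ | ω t = k ∧ ∀ s < t, k < ω s}
      = D {k} * D {n | k < n} ^ (t : ℕ) := by
  have hset : {ω : Fin m → ℕ | ω t = k ∧ ∀ s < t, k < ω s}
      = Set.pi Set.univ (fun s => if s = t then {k} else if s < t then {n | k < n} else Set.univ) := by
    ext ω
    simp only [Set.mem_setOf_eq, Set.mem_pi, Set.mem_univ, forall_true_left]
    constructor
    · rintro ⟨h1, h2⟩ s
      by_cases hs : s = t
      · simp [hs, h1]
      · by_cases hs2 : s < t
        · simp [hs, hs2]; exact h2 s hs2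
        · simp [hs, hs2]
    · intro h
      refine ⟨by simpa using h t, fun s hs => ?_⟩
      have := h s
      simp [ne_of_lt hs, hs] at this
      exact this
  rw [hset, Measure.pi_pi]
  have : ∀ s : Fin m, D (if s = t then ({k} : Set ℕ) else if s < t then {n | k < n} else Set.univ)
      = if s = t then D {k} else if s < t then D {n | k < n} else 1 := by
    intro s; split_ifs <;> simp
  simp_rw [this]
  rw [Finset.prod_eq_mul_prod_sdiff_singleton_of_mem (Finset.mem_univ t)]
  simp only [if_pos rfl]
  congr 1
  have h2 : ∀ s ∈ Finset.univ \ {t}, (if s = t then D {k} else if s < t then D {n | k < n} else 1)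
      = if s < t then D {n | k < n} else 1 := by
    intro s hs
    simp only [Finset.mem_sdiff, Finset.mem_singleton] at hs
    rw [if_neg hs.2]
  rw [Finset.prod_congr rfl h2, Finset.prod_ite, Finset.prod_const, Finset.prod_const, one_pow, mul_one]
  congr 1
  have : (Finset.univ \ {t}).filter (fun s => s < t) = Finset.Iio t := by
    ext s
    simp only [Finset.mem_filter, Finset.mem_sdiff, Finset.mem_singleton, Finset.mem_univ,
      true_and, Finset.mem_Iio]
    exact ⟨fun h => h.2, fun h => ⟨ne_of_lt h, h⟩⟩
  rw [this, Fin.card_Iio]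

lemma cyl_measurable (m k : ℕ) (t : Fin m) :
    MeasurableSet {ω : Fin m → ℕ | ω t = k ∧ ∀ s < t, k < ω s} := by
  have : {ω : Fin m → ℕ | ω t = k ∧ ∀ s < t, k < ω s}
      = ((fun ω : Fin m → ℕ => ω t) ⁻¹' {k}) ∩
        ⋂ (s : Fin m) (_ : s < t), (fun ω : Fin m → ℕ => ω s) ⁻¹' {n | k < n} := by
    ext ω; simp [Set.mem_iInter]
  rw [this]
  exact ((measurable_pi_apply t) MeasurableSet.of_discrete).inter
    (MeasurableSet.iInter fun s => MeasurableSet.iInter fun _ =>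
      (measurable_pi_apply s) MeasurableSet.of_discrete)

lemma Bk_meas (m k : ℕ) (D : Measure ℕ) [IsProbabilityMeasure D] :
    Measure.pi (fun _ : Fin m => D) {ω : Fin m → ℕ | ∃ t : Fin m, ω t = k ∧ ∀ s < t, k < ω s}
      = D {k} * ∑ i ∈ Finset.range m, D {n | k < n} ^ i := by
  have hun : {ω : Fin m → ℕ | ∃ t : Fin m, ω t = k ∧ ∀ s < t, k < ω s}
      = ⋃ t : Fin m, {ω : Fin m → ℕ | ω t = k ∧ ∀ s < t, k < ω s} := by
    ext ω; simp [Set.mem_iUnion]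
  have hdisj : Pairwise (Function.onFun Disjoint
      (fun t : Fin m => {ω : Fin m → ℕ | ω t = k ∧ ∀ s < t, k < ω s})) := by
    intro t t' hne
    rcases lt_or_gt_of_ne hne with h | h
    · refine Set.disjoint_left.mpr ?_
      rintro ω ⟨h1, -⟩ ⟨-, h2⟩
      exact lt_irrefl k (h1 ▸ h2 t h)
    · refine Set.disjoint_left.mpr ?_
      rintro ω ⟨-, h2⟩ ⟨h1, -⟩
      exact lt_irrefl k (h1 ▸ h2 t' h)
  rw [hun, measure_iUnion hdisj (fun t => cyl_measurable m k t), tsum_fintype]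
  simp_rw [cyl_meas]
  rw [← Finset.mul_sum, Fin.sum_univ_eq_sum_range (fun i => D {n | k < n} ^ i)]

lemma geom_ennreal (q : ℝ≥0∞) (hq : q ≤ 1) (m : ℕ) :
    (∑ i ∈ Finset.range m, q ^ i) * (1 - q) = 1 - q ^ m := by
  have hqt : q ≠ ⊤ := (hq.trans_lt (by norm_num)).ne
  induction m with
  | zero => simp
  | succ m ih =>
    rw [Finset.sum_range_succ, add_mul, ih, ENNReal.mul_sub (fun _ _ => ENNReal.pow_ne_top hqt),
      mul_one, ← pow_succ]
    exact tsub_add_tsub_cancel (pow_le_one' hq m) (pow_le_pow_right_of_le_one' hq (Nat.le_succ m))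

example : (2:ℝ≥0∞) * (1/2) = 1 := by
  rw [one_div, ENNReal.mul_inv_cancel (by norm_num) (by norm_num)]
example : ENNReal.ofReal (1/2:ℝ) = 1/2 := by
  rw [ENNReal.ofReal_div_of_pos (by norm_num)]
  norm_num
example : (1:ℝ≥0∞) - 1/2 = 1/2 := by rw [one_div]; exact ENNReal.one_sub_inv_two
example : ENNReal.ofReal (2:ℝ) = 2 := by norm_num
example : ENNReal.ofReal (3:ℝ) = 3 := by norm_num
example (c : ℝ≥0∞) (h : 1 ≤ c * 3) : 1/3 ≤ c := by
  rw [ENNReal.div_le_iff_le_mul (Or.inl (by norm_num)) (Or.inl (by norm_num))]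
  exact h

lemma zpow3 (j N : ℕ) : (3:ℝ)^((j:ℤ)-(N:ℤ)) = 3^j * ((3:ℝ)^N)⁻¹ := by
  rw [zpow_sub₀ (by norm_num : (3:ℝ) ≠ 0), zpow_natCast, zpow_natCast, div_eq_mul_inv]

lemma Dle_eq (N k : ℕ) (hk1 : 1 ≤ k) (hkN : k ≤ N - 1)
    (D : Measure ℕ) [IsProbabilityMeasure D]
    (hD1 : ∀ j, 1 ≤ j → j ≤ N - 1 → D {j} = ENNReal.ofReal ((1/2) * (3:ℝ)^((j:ℤ)-(N:ℤ))))
    (hD2 : D {n | n = 0 ∨ N < n} = 0) :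
    D {n | n ≤ k} = ENNReal.ofReal (∑ j ∈ Finset.Icc 1 k, (1/2) * (3:ℝ)^((j:ℤ)-(N:ℤ))) := by
  have h0 : D {(0:ℕ)} = 0 := by
    refine measure_mono_null ?_ hD2
    intro n hn
    simp only [Set.mem_singleton_iff] at hn
    exact Or.inl hn
  have hsplit : {n : ℕ | n ≤ k} = {0} ∪ ↑(Finset.Icc 1 k) := by
    ext n; simp; omega
  have h1 : D {n | n ≤ k} = D ↑(Finset.Icc 1 k) := by
    refine le_antisymm ?_ (measure_mono ?_)
    · rw [hsplit]
      refine (measure_union_le _ _).trans ?_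
      simp [h0]
    · intro n hn
      simp only [Finset.coe_Icc, Set.mem_Icc] at hn
      exact hn.2
  rw [h1, finset_meas]
  have hcong : ∀ j ∈ Finset.Icc 1 k, D {j} = ENNReal.ofReal ((1/2) * (3:ℝ)^((j:ℤ)-(N:ℤ))) := by
    intro j hj
    simp only [Finset.mem_Icc] at hj
    exact hD1 j hj.1 (hj.2.trans hkN)
  rw [Finset.sum_congr rfl hcong, ← ENNReal.ofReal_sum_of_nonneg (fun j _ => by positivity)]

lemma part1 (N m k : ℕ) (hk1 : 1 ≤ k) (hkN : k ≤ N - 1) (hN2 : 2 ≤ N) (hm : 3^N ≤ m)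
    (D : Measure ℕ) [IsProbabilityMeasure D]
    (hD1 : ∀ j, 1 ≤ j → j ≤ N - 1 → D {j} = ENNReal.ofReal ((1/2) * (3:ℝ)^((j:ℤ)-(N:ℤ))))
    (hD2 : D {n | n = 0 ∨ N < n} = 0) :
    (1/3 : ℝ≥0∞) ≤ Measure.pi (fun _ : Fin m => D)
      {ω : Fin m → ℕ | ∃ t : Fin m, ω t = k ∧ ∀ s < t, k < ω s} := by
  rw [Bk_meas]
  set p := D {k} with hp
  set q := D {n | k < n} with hq
  set S := ∑ i ∈ Finset.range m, q ^ i with hS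
  set r := D {n | n ≤ k} with hr
  -- basic facts
  have hq1 : q ≤ 1 := prob_le_one
  have hr1 : r ≤ 1 := prob_le_one
  have hcompl : q = 1 - r := by
    have : {n : ℕ | k < n} = {n : ℕ | n ≤ k}ᶜ := by ext n; simp
    rw [hq, this, measure_compl MeasurableSet.of_discrete (measure_ne_top D _), measure_univ, hr]
  have h1q : 1 - q = r := by rw [hcompl, ENNReal.sub_sub_cancel (by norm_num) hr1]
  -- geometric identity
  have hgeom : S * r = 1 - q ^ m := by rw [← h1q, hS, geom_ennreal q hq1]
  -- real values
  set R : ℝ := ∑ j ∈ Finset.Icc 1 k, (1/2) * (3:ℝ)^((j:ℤ)-(N:ℤ)) with hRdef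
  have hrR : r = ENNReal.ofReal R := Dle_eq N k hk1 hkN D hD1 hD2
  have hpR : p = ENNReal.ofReal ((1/2) * (3:ℝ)^((k:ℤ)-(N:ℤ))) := hD1 k hk1 hkN
  -- 2r ≤ 3p
  have hgeo3 := geom3 k
  have hinv : (0:ℝ) ≤ ((3:ℝ)^N)⁻¹ := by positivity
  have hRalt : R = (∑ j ∈ Finset.Icc 1 k, (3:ℝ)^j) * (((3:ℝ)^N)⁻¹ * (1/2)) := by
    rw [hRdef, Finset.sum_mul]
    refine Finset.sum_congr rfl fun j _ => ?_
    rw [zpow3]; ring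
  have hreal : 2 * R ≤ 3 * ((1/2) * (3:ℝ)^((k:ℤ)-(N:ℤ))) := by
    rw [hRalt, zpow3]
    nlinarith [mul_le_mul_of_nonneg_right hgeo3 hinv]
  have h2r3p : 2 * r ≤ 3 * p := by
    rw [hrR, hpR, ← ENNReal.ofReal_ofNat 2, ← ENNReal.ofReal_ofNat 3,
      ← ENNReal.ofReal_mul (by norm_num), ← ENNReal.ofReal_mul (by norm_num)]
    exact ENNReal.ofReal_le_ofReal hreal
  -- q^m ≤ 1/2
  have hx0 : (0:ℝ) ≤ 1 - (3/2) * ((3:ℝ)^N)⁻¹ := by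
    have h9 : (9:ℝ) ≤ 3^N := by
      calc (9:ℝ) = 3^2 := by norm_num
      _ ≤ 3^N := by apply pow_le_pow_right₀ (by norm_num) hN2
    have : ((3:ℝ)^N)⁻¹ ≤ (9:ℝ)⁻¹ := by
      rw [inv_le_inv₀ (by positivity) (by norm_num)]; exact h9
    nlinarith
  have hD1r : D {1} = ENNReal.ofReal ((3/2) * ((3:ℝ)^N)⁻¹) := by
    rw [hD1 1 le_rfl (by omega)]
    congr 1
    rw [zpow3]; norm_num; ring
  have hD1le : D {1} ≤ r := by
    rw [hr]; exact measure_mono (fun n hn => by simp at hn ⊢; omega)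
  have hqle : q ≤ ENNReal.ofReal (1 - (3/2) * ((3:ℝ)^N)⁻¹) := by
    rw [hcompl]
    refine (tsub_le_tsub_left hD1le 1).trans (le_of_eq ?_)
    rw [hD1r, ← ENNReal.ofReal_one, ← ENNReal.ofReal_sub _ (by positivity)]
  have hqm : q ^ m ≤ 1/2 := by
    calc q ^ m ≤ ENNReal.ofReal (1 - (3/2) * ((3:ℝ)^N)⁻¹) ^ m := pow_le_pow_left' hqle m
    _ = ENNReal.ofReal ((1 - (3/2) * ((3:ℝ)^N)⁻¹) ^ m) := (ENNReal.ofReal_pow hx0 m).symm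
    _ ≤ ENNReal.ofReal (1/2) := ENNReal.ofReal_le_ofReal (bern_half N m hN2 hm)
    _ = 1/2 := by rw [ENNReal.ofReal_div_of_pos (by norm_num)]; norm_num
  have hhalf : (1:ℝ≥0∞)/2 ≤ 1 - q ^ m := by
    refine le_trans (le_of_eq ?_) (tsub_le_tsub_left hqm 1)
    rw [one_div]; exact ENNReal.one_sub_inv_two.symm
  -- conclude
  have hfinal : 1 ≤ (p * S) * 3 := by
    have c1 : (1:ℝ≥0∞) = 2 * (1/2) := by
      rw [one_div, ENNReal.mul_inv_cancel (by norm_num) (by norm_num)]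
    calc (1:ℝ≥0∞) = 2 * (1/2) := c1
    _ ≤ 2 * (S * r) := by rw [hgeom]; exact mul_le_mul_right hhalf 2
    _ = (2 * r) * S := by ring
    _ ≤ (3 * p) * S := mul_le_mul_left h2r3p S
    _ = (p * S) * 3 := by ring
  rw [ENNReal.div_le_iff_le_mul (Or.inl (by norm_num)) (Or.inl (by norm_num))]
  exact hfinal


lemma DN_ge (N : ℕ) (hN : 1 ≤ N)
    (D : Measure ℕ) [IsProbabilityMeasure D]
    (hD1 : ∀ j, 1 ≤ j → j ≤ N - 1 → D {j} = ENNReal.ofReal ((1/2) * (3:ℝ)^((j:ℤ)-(N:ℤ))))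
    (hD2 : D {n | n = 0 ∨ N < n} = 0) :
    (1/3 : ℝ≥0∞) ≤ D {N} := by
  obtain ⟨N', rfl⟩ : ∃ N', N = N' + 1 := ⟨N - 1, by omega⟩
  have hsub : N' + 1 - 1 = N' := by omega
  have huniv : (1:ℝ≥0∞) = ∑ j ∈ Finset.Icc 1 (N'+1), D {j} := by
    have hset : (Set.univ : Set ℕ) = {n | n = 0 ∨ (N'+1) < n} ∪ ↑(Finset.Icc 1 (N'+1)) := by
      ext n; simp; omega
    rw [← measure_univ (μ := D), ← finset_meas]
    refine le_antisymm ?_ (measure_mono (Set.subset_univ _))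
    rw [hset]
    refine (measure_union_le _ _).trans ?_
    simp [hD2]
  rw [Finset.sum_Icc_succ_top (by omega : 1 ≤ N' + 1)] at huniv
  set s := ∑ j ∈ Finset.Icc 1 N', D {j} with hs
  -- bound s
  have hsle : s ≤ ENNReal.ofReal (1/2) := by
    have hcong : ∀ j ∈ Finset.Icc 1 N', D {j} = ENNReal.ofReal ((1/2) * (3:ℝ)^((j:ℤ)-((N'+1:ℕ):ℤ))) := by
      intro j hj
      simp only [Finset.mem_Icc] at hj
      exact hD1 j hj.1 (by omega)
    rw [hs, Finset.sum_congr rfl hcong,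
      ← ENNReal.ofReal_sum_of_nonneg (fun j _ => by positivity)]
    refine ENNReal.ofReal_le_ofReal ?_
    have hR : ∑ j ∈ Finset.Icc 1 N', (1/2) * (3:ℝ)^((j:ℤ)-((N'+1:ℕ):ℤ))
        = (∑ j ∈ Finset.Icc 1 N', (3:ℝ)^j) * (((3:ℝ)^(N'+1))⁻¹ * (1/2)) := by
      rw [Finset.sum_mul]
      refine Finset.sum_congr rfl fun j _ => ?_
      rw [zpow3]; ring
    rw [hR]
    have ha : (0:ℝ) < 3^N' := by positivity
    have hinv : (0:ℝ) ≤ ((3:ℝ)^(N'+1))⁻¹ := by positivity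
    have hkey : ((3:ℝ)^(N'+1))⁻¹ * 3^N' = 1/3 := by
      rw [pow_succ]; field_simp
    nlinarith [mul_le_mul_of_nonneg_right (geom3 N') hinv]
  have hDN : D {N'+1} = 1 - s := by
    refine ENNReal.eq_sub_of_add_eq ?_ ?_
    · exact (hsle.trans_lt ENNReal.ofReal_lt_top).ne
    · rw [add_comm]; exact huniv.symm
  rw [hDN]
  have h12 : s ≤ 1/2 := hsle.trans (by rw [ENNReal.ofReal_div_of_pos (by norm_num)]; norm_num)
  calc (1:ℝ≥0∞)/3 ≤ 1/2 := by
        rw [one_div, one_div]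
        exact ENNReal.inv_le_inv.mpr (by norm_num)
  _ = 1 - 1/2 := by rw [one_div]; exact ENNReal.one_sub_inv_two.symm
  _ ≤ 1 - s := tsub_le_tsub_left h12 1

lemma partN (N m : ℕ) (hN : 1 ≤ N) (hm0 : 0 < m)
    (D : Measure ℕ) [IsProbabilityMeasure D]
    (hD1 : ∀ j, 1 ≤ j → j ≤ N - 1 → D {j} = ENNReal.ofReal ((1/2) * (3:ℝ)^((j:ℤ)-(N:ℤ))))
    (hD2 : D {n | n = 0 ∨ N < n} = 0) :
    (1/3 : ℝ≥0∞) ≤ Measure.pi (fun _ : Fin m => D)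
      {ω : Fin m → ℕ | ∃ t : Fin m, ω t = N ∧ ∀ s < t, N < ω s} := by
  refine (DN_ge N hN D hD1 hD2).trans ?_
  have hsub : {ω : Fin m → ℕ | ω ⟨0, hm0⟩ = N ∧ ∀ s < (⟨0, hm0⟩ : Fin m), N < ω s}
      ⊆ {ω : Fin m → ℕ | ∃ t : Fin m, ω t = N ∧ ∀ s < t, N < ω s} :=
    fun ω h => ⟨⟨0, hm0⟩, h.1, h.2⟩
  calc D {N} = D {N} * D {n | N < n} ^ ((⟨0, hm0⟩ : Fin m) : ℕ) := by simp
  _ = Measure.pi (fun _ : Fin m => D)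
      {ω : Fin m → ℕ | ω ⟨0, hm0⟩ = N ∧ ∀ s < (⟨0, hm0⟩ : Fin m), N < ω s} :=
    (cyl_meas m N D ⟨0, hm0⟩).symm
  _ ≤ _ := measure_mono hsub

lemma lt_measurable (m : ℕ) (t s : Fin m) : MeasurableSet {ω : Fin m → ℕ | ω t < ω s} := by
  have h : {ω : Fin m → ℕ | ω t < ω s}
      = (fun ω : Fin m → ℕ => (ω t, ω s)) ⁻¹' {p : ℕ × ℕ | p.1 < p.2} := rfl
  rw [h]
  exact ((measurable_pi_apply t).prodMk (measurable_pi_apply s)) MeasurableSet.of_discrete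

lemma runmin_measurable (m : ℕ) (t : Fin m) :
    MeasurableSet {ω : Fin m → ℕ | ∀ s < t, ω t < ω s} := by
  have : {ω : Fin m → ℕ | ∀ s < t, ω t < ω s}
      = ⋂ (s : Fin m) (_ : s < t), {ω : Fin m → ℕ | ω t < ω s} := by
    ext ω; simp
  rw [this]
  exact MeasurableSet.iInter fun s => MeasurableSet.iInter fun _ => lt_measurable m t s

lemma pointwise_le (N m : ℕ) (ω : Fin m → ℕ) :
    ∑ k ∈ Finset.Icc 1 N,
      Set.indicator {ω' : Fin m → ℕ | ∃ t : Fin m, ω' t = k ∧ ∀ s < t, k < ω' s}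
        (fun _ => (1:ℝ)) ω
      ≤ ∑ t : Fin m, if ∀ s < t, ω t < ω s then (1 : ℝ) else 0 := by
  rcases Nat.eq_zero_or_pos m with hm | hm
  · have h0 : ∀ k ∈ Finset.Icc 1 N,
        Set.indicator {ω' : Fin m → ℕ | ∃ t : Fin m, ω' t = k ∧ ∀ s < t, k < ω' s}
          (fun _ => (1:ℝ)) ω = 0 := by
      intro k _
      apply Set.indicator_of_notMem
      rintro ⟨t, -⟩
      exact absurd t.2 (by omega)
    rw [Finset.sum_congr rfl h0]
    simp
  · haveI : Inhabited (Fin m) := ⟨⟨0, hm⟩⟩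
    have hL : ∑ k ∈ Finset.Icc 1 N,
        Set.indicator {ω' : Fin m → ℕ | ∃ t : Fin m, ω' t = k ∧ ∀ s < t, k < ω' s}
          (fun _ => (1:ℝ)) ω
        = ((Finset.Icc 1 N).filter
            (fun k => ∃ t : Fin m, ω t = k ∧ ∀ s < t, k < ω s)).card := by
      rw [← Finset.sum_boole]
      refine Finset.sum_congr rfl fun k _ => ?_
      rw [Set.indicator_apply]
      congr 1
    have hR : ∑ t : Fin m, (if ∀ s < t, ω t < ω s then (1 : ℝ) else 0)
        = ((Finset.univ : Finset (Fin m)).filter (fun t => ∀ s < t, ω t < ω s)).card := by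
      rw [← Finset.sum_boole]
    rw [hL, hR]
    refine Nat.cast_le.mpr ?_
    set f : ℕ → Fin m := fun k =>
      if h : ∃ t : Fin m, ω t = k ∧ ∀ s < t, k < ω s then Classical.choose h else default with hf
    refine Finset.card_le_card_of_injOn f ?_ ?_
    · intro k hk
      simp only [Finset.coe_filter, Finset.mem_filter, Set.mem_setOf_eq] at hk
      obtain ⟨-, h⟩ := hk
      have hspec := Classical.choose_spec h
      simp only [Finset.coe_filter, Finset.mem_filter, Finset.mem_univ, true_and, Set.mem_setOf_eq]
      rw [hf]; simp only [dif_pos h]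
      intro s hs
      rw [hspec.1]
      exact hspec.2 s hs
    · intro k1 hk1 k2 hk2 hfe
      simp only [Finset.coe_filter, Set.mem_setOf_eq] at hk1 hk2
      obtain ⟨-, h1⟩ := hk1
      obtain ⟨-, h2⟩ := hk2
      have hs1 := Classical.choose_spec h1
      have hs2 := Classical.choose_spec h2
      rw [hf] at hfe
      simp only [dif_pos h1, dif_pos h2] at hfe
      rw [← hs1.1, ← hs2.1, hfe]

open scoped Classical ENNReal in
/-- Let `x_0,...,x_{m-1}` be i.i.d. samples (modelled by the product measure
`Measure.pi` with identical coordinate distribution `D`) from the distribution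
on `[N]` with `D{k} = (1/2)·3^{k-N}` for `k ∈ [N-1]` and the remaining mass at
`N`, where `m = T/2` and `T ≥ N·3^N`.  Let `A_k` be the event that the first
sample lying in `{1,...,k}` equals exactly `k`.  Then `P(A_k) ≥ 1/3` for every
`k ∈ [N-1]`, and the expected number of strict running minima is at least `N/3`. -/
theorem stmt_11 (N T m : ℕ) (hN : 1 ≤ N)
    (hT : (N : ℝ) * 3 ^ N ≤ (T : ℝ)) (hm : m = T / 2)
    (D : Measure ℕ) [IsProbabilityMeasure D]
    (hD1 : ∀ k, 1 ≤ k → k ≤ N - 1 →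
      D {k} = ENNReal.ofReal ((1 / 2) * (3 : ℝ) ^ ((k : ℤ) - (N : ℤ))))
    (hD2 : D {n | n = 0 ∨ N < n} = 0) :
    (∀ k, 1 ≤ k → k ≤ N - 1 →
      (1 / 3 : ℝ≥0∞) ≤
        Measure.pi (fun _ : Fin m => D)
          {ω : Fin m → ℕ | ∃ t : Fin m, ω t = k ∧ ∀ s < t, k < ω s}) ∧
      (N : ℝ) / 3 ≤
        ∫ ω, (∑ t : Fin m, if ∀ s < t, ω t < ω s then (1 : ℝ) else 0)
          ∂(Measure.pi fun _ : Fin m => D) := by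
  have hTnat : N * 3 ^ N ≤ T := by
    have : ((N * 3 ^ N : ℕ) : ℝ) ≤ (T : ℝ) := by push_cast; exact hT
    exact_mod_cast this
  have h3T : 3 ≤ T := by
    refine le_trans ?_ hTnat
    calc 3 = 1 * 3 ^ 1 := by norm_num
    _ ≤ N * 3 ^ N := Nat.mul_le_mul hN (Nat.pow_le_pow_right (by norm_num) hN)
  have hm1 : 0 < m := by omega
  have hmN : 2 ≤ N → 3 ^ N ≤ m := by
    intro h2
    have h2T : 2 * 3 ^ N ≤ T := le_trans (Nat.mul_le_mul_right _ h2) hTnat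
    omega
  set μ := Measure.pi (fun _ : Fin m => D) with hμdef
  refine ⟨fun k hk1 hk2 => part1 N m k hk1 hk2 (by omega) (hmN (by omega)) D hD1 hD2, ?_⟩
  -- part 2
  have hBmeas : ∀ k : ℕ,
      MeasurableSet {ω : Fin m → ℕ | ∃ t : Fin m, ω t = k ∧ ∀ s < t, k < ω s} := by
    intro k
    have h : {ω : Fin m → ℕ | ∃ t : Fin m, ω t = k ∧ ∀ s < t, k < ω s}
        = ⋃ t : Fin m, {ω : Fin m → ℕ | ω t = k ∧ ∀ s < t, k < ω s} := by
      ext ω; simp [Set.mem_iUnion]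
    rw [h]
    exact MeasurableSet.iUnion fun t => cyl_measurable m k t
  have hint_g : ∀ k : ℕ, Integrable
      (Set.indicator {ω : Fin m → ℕ | ∃ t : Fin m, ω t = k ∧ ∀ s < t, k < ω s}
        (fun _ => (1:ℝ))) μ := fun k =>
    (integrable_indicator_iff (hBmeas k)).2 (integrableOn_const (measure_ne_top μ _))
  have hg_int : Integrable (fun ω => ∑ k ∈ Finset.Icc 1 N,
      Set.indicator {ω' : Fin m → ℕ | ∃ t : Fin m, ω' t = k ∧ ∀ s < t, k < ω' s}
        (fun _ => (1:ℝ)) ω) μ := integrable_finset_sum _ (fun k _ => hint_g k)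
  have hf_terms : ∀ t : Fin m, (fun ω : Fin m → ℕ => if ∀ s < t, ω t < ω s then (1:ℝ) else 0)
      = Set.indicator {ω : Fin m → ℕ | ∀ s < t, ω t < ω s} (fun _ => (1:ℝ)) := by
    intro t; ext ω
    by_cases h : ∀ s < t, ω t < ω s
    · simp [h, Set.indicator_apply]
    · simp [h, Set.indicator_apply]
  have hf_int : Integrable (fun ω : Fin m → ℕ =>
      ∑ t : Fin m, if ∀ s < t, ω t < ω s then (1:ℝ) else 0) μ := by
    refine integrable_finset_sum _ (fun t _ => ?_)
    rw [hf_terms t]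
    exact (integrable_indicator_iff (runmin_measurable m t)).2
      (integrableOn_const (measure_ne_top μ _))
  have hgint_eq : ∫ ω, (∑ k ∈ Finset.Icc 1 N,
      Set.indicator {ω' : Fin m → ℕ | ∃ t : Fin m, ω' t = k ∧ ∀ s < t, k < ω' s}
        (fun _ => (1:ℝ)) ω) ∂μ
      = ∑ k ∈ Finset.Icc 1 N,
          (μ {ω : Fin m → ℕ | ∃ t : Fin m, ω t = k ∧ ∀ s < t, k < ω s}).toReal := by
    rw [integral_finset_sum _ (fun k _ => hint_g k)]
    refine Finset.sum_congr rfl fun k _ => ?_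
    rw [integral_indicator_const (1:ℝ) (hBmeas k), smul_eq_mul, mul_one, measureReal_def]
  have hbound : ∀ k ∈ Finset.Icc 1 N,
      (1/3 : ℝ) ≤ (μ {ω : Fin m → ℕ | ∃ t : Fin m, ω t = k ∧ ∀ s < t, k < ω s}).toReal := by
    intro k hk
    simp only [Finset.mem_Icc] at hk
    have hEN : (1/3 : ℝ≥0∞) ≤ μ {ω : Fin m → ℕ | ∃ t : Fin m, ω t = k ∧ ∀ s < t, k < ω s} := by
      rcases eq_or_lt_of_le hk.2 with hEq | hlt
      · rw [hEq]
        exact partN N m hN hm1 D hD1 hD2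
      · exact part1 N m k hk.1 (by omega) (by omega) (hmN (by omega)) D hD1 hD2
    have h1 := ENNReal.toReal_mono (measure_ne_top μ _) hEN
    rw [ENNReal.toReal_div] at h1
    simpa using h1
  calc (N:ℝ)/3 = ∑ _k ∈ Finset.Icc 1 N, (1/3 : ℝ) := by
        rw [Finset.sum_const, Nat.card_Icc]
        simp only [Nat.add_sub_cancel, nsmul_eq_mul]
        ring
  _ ≤ ∑ k ∈ Finset.Icc 1 N,
        (μ {ω : Fin m → ℕ | ∃ t : Fin m, ω t = k ∧ ∀ s < t, k < ω s}).toReal :=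
      Finset.sum_le_sum hbound
  _ = _ := hgint_eq.symm
  _ ≤ _ := integral_mono hg_int hf_int (fun ω => pointwise_le N m ω)
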